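/- Let Δ be a simplicial complex on the vertex set {x_1,…,x_n} with facet ideal I = F(Δ) ⊆ R = k[x_1,…,x_n]. Then I is the intersection of the prime ideals (x : x ∈ A), where A ranges over all minimal vertex covers of Δ. -/

import Mathlib

open MvPolynomial

/-- `Δ` is the facet set of a simplicial complex: facets are nonempty and
none of them contains another. -/
def IsFacetFamily {V : Type*} [DecidableEq V] (Δ : Finset (Finset V)) : Prop :=
  (∀ F ∈ Δ, F.Nonempty) ∧ ∀ F ∈ Δ, ∀ G ∈ Δ, F ⊆ G → F = G

/-- `A` is a vertex cover of the simplicial complex with facet set `Δ`. -/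
def IsVertexCover {V : Type*} [DecidableEq V] (Δ : Finset (Finset V)) (A : Finset V) : Prop :=
  ∀ F ∈ Δ, ∃ v ∈ A, v ∈ F

/-- `A` is a minimal vertex cover of the simplicial complex with facet set `Δ`. -/
def IsMinimalVertexCover {V : Type*} [DecidableEq V] (Δ : Finset (Finset V))
    (A : Finset V) : Prop :=
  IsVertexCover Δ A ∧ ∀ B ⊆ A, IsVertexCover Δ B → B = A

/-- The vertex covering number: the smallest cardinality of a vertex cover. -/
noncomputable def coveringNumber {V : Type*} [DecidableEq V] (Δ : Finset (Finset V)) : ℕ :=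
  sInf {c : ℕ | ∃ A : Finset V, IsVertexCover Δ A ∧ A.card = c}

/-- The facet ideal of the simplicial complex with facet set `Δ`. -/
noncomputable def facetIdeal (k : Type*) [Field k] {n : ℕ} (Δ : Finset (Finset (Fin n))) :
    Ideal (MvPolynomial (Fin n) k) :=
  Ideal.span ((fun F : Finset (Fin n) => ∏ i ∈ F, X i) '' ↑Δ)

/-- The height of a prime ideal, as the height of the corresponding point of the
prime spectrum ordered by inclusion. -/
noncomputable def primeHeight {R : Type*} [CommRing R] (p : PrimeSpectrum R) : ℕ∞ :=
  Order.height p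

/-- The height of an ideal: the infimum of the heights of the primes containing it. -/
noncomputable def idealHeight {R : Type*} [CommRing R] (I : Ideal R) : ℕ∞ :=
  ⨅ p ∈ {p : PrimeSpectrum R | I ≤ p.asIdeal}, primeHeight p


section Aux
open MvPolynomial

lemma prod_X_eq_monomial' (k : Type*) [Field k] {n : ℕ} (F : Finset (Fin n)) :
    (∏ i ∈ F, (X i : MvPolynomial (Fin n) k)) =
      monomial (∑ i ∈ F, Finsupp.single i 1) (1 : k) := by
  classical
  induction F using Finset.induction with
  | empty => simp
  | insert _ _ h ih =>
      rw [Finset.prod_insert h, Finset.sum_insert h, ih, X, monomial_mul, one_mul]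

lemma exists_minimal_cover {V : Type*} [DecidableEq V] (Δ : Finset (Finset V))
    (A : Finset V) (hA : IsVertexCover Δ A) :
    ∃ B ⊆ A, IsMinimalVertexCover Δ B := by
  classical
  induction A using Finset.strongInduction with
  | _ A ih =>
    by_cases h : ∀ B ⊆ A, IsVertexCover Δ B → B = A
    · exact ⟨A, le_refl _, hA, h⟩
    · push_neg at h
      obtain ⟨B, hBA, hBc, hBne⟩ := h
      obtain ⟨C, hCB, hC⟩ := ih B (lt_of_le_of_ne hBA hBne) hBc
      exact ⟨C, hCB.trans hBA, hC⟩

lemma single_sum_le_iff {n : ℕ} (F : Finset (Fin n)) (m : Fin n →₀ ℕ) :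
    (∑ i ∈ F, Finsupp.single i 1) ≤ m ↔ ∀ j ∈ F, m j ≠ 0 := by
  classical
  rw [Finsupp.le_def]
  constructor
  · intro h j hj
    have := h j
    rw [Finset.sum_apply'] at this
    simp only [Finsupp.single_apply, Finset.sum_ite_eq' F j (fun _ => 1), hj, if_pos] at this
    omega
  · intro h j
    rw [Finset.sum_apply']
    simp only [Finsupp.single_apply, Finset.sum_ite_eq' F j (fun _ => 1)]
    by_cases hj : j ∈ F
    · simpa [hj] using Nat.one_le_iff_ne_zero.2 (h j hj)
    · simp [hj]

lemma cover_combinatorics {n : ℕ} (Δ : Finset (Finset (Fin n))) (S : Finset (Fin n)) :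
    (∃ F ∈ Δ, F ⊆ S) ↔
      ∀ A : Finset (Fin n), IsMinimalVertexCover Δ A → ∃ i ∈ A, i ∈ S := by
  constructor
  · rintro ⟨F, hF, hFS⟩ A hA
    obtain ⟨v, hvA, hvF⟩ := hA.1 F hF
    exact ⟨v, hvA, hFS hvF⟩
  · intro h
    by_contra hc
    push_neg at hc
    have hcov : IsVertexCover Δ Sᶜ := by
      intro F hF
      obtain ⟨v, hvF, hvS⟩ := Finset.not_subset.1 (hc F hF)
      exact ⟨v, Finset.mem_compl.2 hvS, hvF⟩
    obtain ⟨B, hBA, hB⟩ := exists_minimal_cover Δ Sᶜ hcov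
    obtain ⟨i, hiB, hiS⟩ := h B hB
    exact Finset.mem_compl.1 (hBA hiB) hiS

end Aux

/-- The facet ideal is the intersection of the prime ideals generated by the minimal
vertex covers of `Δ`. -/
theorem facetIdeal_eq_inf_minimalVertexCovers (k : Type*) [Field k] {n : ℕ}
    (Δ : Finset (Finset (Fin n))) (hΔ : IsFacetFamily Δ) :
    facetIdeal k Δ =
      ⨅ (A : Finset (Fin n)) (_ : IsMinimalVertexCover Δ A),
        Ideal.span ((X : Fin n → MvPolynomial (Fin n) k) '' ↑A) := by

  classical
  have hrw : facetIdeal k Δ =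
      Ideal.span ((fun s => monomial s (1 : k)) ''
        ((fun F : Finset (Fin n) => ∑ i ∈ F, Finsupp.single i 1) '' ↑Δ)) := by
    rw [Set.image_image]
    unfold facetIdeal
    congr 1
    exact Set.image_congr fun F _ => prod_X_eq_monomial' k F
  ext f
  rw [hrw, mem_ideal_span_monomial_image]
  simp only [Ideal.mem_iInf, mem_ideal_span_X_image]
  constructor
  · intro h A hA m hm
    obtain ⟨s, hs, hsm⟩ := h m hm
    obtain ⟨F, hF, rfl⟩ := hs
    have hFS : F ⊆ m.support := fun j hj =>
      Finsupp.mem_support_iff.2 ((single_sum_le_iff F m).1 hsm j hj)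
    obtain ⟨i, hiA, hiS⟩ := (cover_combinatorics Δ m.support).1 ⟨F, hF, hFS⟩ A hA
    exact ⟨i, hiA, Finsupp.mem_support_iff.1 hiS⟩
  · intro h m hm
    have : ∀ A : Finset (Fin n), IsMinimalVertexCover Δ A → ∃ i ∈ A, i ∈ m.support := by
      intro A hA
      obtain ⟨i, hiA, hi⟩ := h A hA m hm
      exact ⟨i, hiA, Finsupp.mem_support_iff.2 hi⟩
    obtain ⟨F, hF, hFS⟩ := (cover_combinatorics Δ m.support).2 this
    exact ⟨_, Set.mem_image_of_mem _ hF,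
      (single_sum_le_iff F m).2 fun j hj => Finsupp.mem_support_iff.1 (hFS hj)⟩
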